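/- Let R be an associative unital ring. A left R-module M is semi-Artinian if and only if for every left R-module F with zero socle, every R-linear map from M to F is the zero map. -/

import Mathlib

universe u v w

/-- The socle of a module: the sum (supremum) of all simple submodules. -/
def moduleSocle (R : Type u) [Ring R] (M : Type v) [AddCommGroup M] [Module R M] :
    Submodule R M :=
  sSup {S : Submodule R M | IsSimpleModule R S}

/-- A submodule `N` of `M` is essential if `N ⊓ L ≠ ⊥` for every nonzero submodule `L` of `M`. -/
def IsEssentialSubmodule {R : Type u} [Ring R] {M : Type v} [AddCommGroup M] [Module R M]
    (N : Submodule R M) : Prop :=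
  ∀ L : Submodule R M, L ≠ ⊥ → N ⊓ L ≠ ⊥

/-- A module is semi-Artinian if every nonzero quotient has a nonzero socle. -/
def IsSemiartinianModule (R : Type u) [Ring R] (M : Type v) [AddCommGroup M] [Module R M] :
    Prop :=
  ∀ N : Submodule R M, N ≠ ⊤ → moduleSocle R (M ⧸ N) ≠ ⊥

/-- A module is singular if the annihilator of each of its elements is an essential left
ideal of `R`. -/
def IsSingularModule (R : Type u) [Ring R] (M : Type v) [AddCommGroup M] [Module R M] : Prop :=
  ∀ m : M, IsEssentialSubmodule (LinearMap.ker (LinearMap.toSpanSingleton R M m))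

/-- Property (◇): every finitely generated left `R`-module containing an essential simple
submodule is Artinian. -/
def HasPropertyDiamond (R : Type u) [Ring R] : Prop :=
  ∀ (M : Type v) [AddCommGroup M] [Module R M], Module.Finite R M →
    (∃ S : Submodule R M, IsSimpleModule R S ∧ IsEssentialSubmodule S) → IsArtinian R M

/-- A left C-ring: every nonzero cyclic singular left module has a nonzero socle. -/
def IsLeftCRing (R : Type u) [Ring R] : Prop :=
  ∀ (M : Type v) [AddCommGroup M] [Module R M], Nontrivial M →
    (∃ m : M, Submodule.span R {m} = ⊤) → IsSingularModule R M →
    moduleSocle R M ≠ ⊥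

/-- The Dickson torsion part of a module: the sum of all its semi-Artinian submodules. -/
def dicksonTorsionPart (R : Type u) [Ring R] (A : Type v) [AddCommGroup A] [Module R A] :
    Submodule R A :=
  sSup {N : Submodule R A | IsSemiartinianModule R N}

/-- A module `M` is semi-Artinian iff every `R`-linear map from `M` to a module with
zero socle is zero. -/
theorem stmt0 (R : Type u) [Ring R] (M : Type v) [AddCommGroup M] [Module R M] :
    IsSemiartinianModule R M ↔
      ∀ (F : Type v) [AddCommGroup F] [Module R F],
        moduleSocle R F = ⊥ → ∀ f : M →ₗ[R] F, f = 0 := by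
  constructor
  · intro h F _ _ hF f
    by_contra hf
    have hker : LinearMap.ker f ≠ ⊤ := by rwa [Ne, LinearMap.ker_eq_top]
    have hsoc := h _ hker
    rw [moduleSocle, Ne, sSup_eq_bot] at hsoc
    push_neg at hsoc
    obtain ⟨S, hS, hSne⟩ := hsoc
    set g : (M ⧸ LinearMap.ker f) →ₗ[R] F := (LinearMap.ker f).liftQ f le_rfl with hg
    have hginj : Function.Injective g := by
      rw [← LinearMap.ker_eq_bot]
      exact Submodule.ker_liftQ_eq_bot' _ _ rfl
    haveI hS' : IsSimpleModule R S := hS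
    have hT : IsSimpleModule R (S.map g) :=
      IsSimpleModule.congr (Submodule.equivMapOfInjective g hginj S).symm
    have hmem : S.map g ∈ {T : Submodule R F | IsSimpleModule R T} := hT
    have hbot : S.map g = ⊥ := by
      rw [moduleSocle, sSup_eq_bot] at hF
      exact hF _ hmem
    haveI := hT
    haveI hnt : Nontrivial (S.map g) := IsSimpleModule.nontrivial R _
    rw [hbot] at hnt
    exact not_nontrivial _ hnt
  · intro h N hN
    intro hsoc
    have hzero := h (M ⧸ N) hsoc N.mkQ
    haveI : Nontrivial (M ⧸ N) := (Submodule.Quotient.nontrivial_iff (p := N)).mpr hN.lt_top.ne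
    obtain ⟨x, y, hxy⟩ := exists_pair_ne (M ⧸ N)
    obtain ⟨a, rfl⟩ := N.mkQ_surjective x
    obtain ⟨b, rfl⟩ := N.mkQ_surjective y
    rw [show N.mkQ a = 0 from by rw [hzero]; rfl, show N.mkQ b = 0 from by rw [hzero]; rfl] at hxy
    exact hxy rfl
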